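/- Let B be a unital complex C*-algebra and ψ₁, …, ψ_d a Cuntz family of order d in B with canonical endomorphism σ. Then the totally antisymmetric element S := (d!)^{-1/2} Σ_{p ∈ Sym(d)} sign(p) ψ_{p(1)} ψ_{p(2)} ⋯ ψ_{p(d)} satisfies the special conjugate identity S* σ(S) = (−1)^{d−1} d^{−1} · 1. -/

import Mathlib

/-- A Cuntz family of order `d` in a unital C*-algebra `B`:  a family
`ψ₁, …, ψ_d` with `ψᵢ* ψⱼ = δᵢⱼ 1` and `Σᵢ ψᵢ ψᵢ* = 1`. -/
def IsCuntzFamily {B : Type*} [CStarAlgebra B] {d : ℕ} (ψ : Fin d → B) : Prop :=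
  (∀ i j, star (ψ i) * ψ j = if i = j then (1 : B) else 0) ∧
    ∑ i, ψ i * star (ψ i) = 1

/-- The canonical endomorphism `σ(b) := Σᵢ ψᵢ b ψᵢ*` of a Cuntz family. -/
def cuntzEndo {B : Type*} [CStarAlgebra B] {d : ℕ} (ψ : Fin d → B) (b : B) : B :=
  ∑ i, ψ i * b * star (ψ i)

/-- The word `ψ_J := ψ_{j₁} ⋯ ψ_{j_r}` associated with a multi-index
`J = (j₁, …, j_r) ∈ {1, …, d}^r`. -/
def cuntzWord {B : Type*} [CStarAlgebra B] {d : ℕ} (ψ : Fin d → B) {r : ℕ}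
    (J : Fin r → Fin d) : B :=
  (List.ofFn fun k => ψ (J k)).prod

/-- The permutation operator
`θ(p) := Σ_{l₁,…,l_r} ψ_{l_{p(1)}} ⋯ ψ_{l_{p(r)}} ψ_{l_r}* ⋯ ψ_{l₁}*`. -/
def cuntzPermOp {B : Type*} [CStarAlgebra B] {d : ℕ} (ψ : Fin d → B) {r : ℕ}
    (p : Equiv.Perm (Fin r)) : B :=
  ∑ l : Fin r → Fin d, cuntzWord ψ (l ∘ p) * star (cuntzWord ψ l)

section aux
variable {B : Type*} [CStarAlgebra B] {d : ℕ} {ψ : Fin d → B}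

lemma cuntzWord_succ {r : ℕ} (J : Fin (r+1) → Fin d) :
    cuntzWord ψ J = ψ (J 0) * cuntzWord ψ (J ∘ Fin.succ) := by
  simp [cuntzWord, List.ofFn_succ, Function.comp]

lemma cuntzWord_cons {r : ℕ} (i : Fin d) (J : Fin r → Fin d) :
    cuntzWord ψ (Fin.cons i J) = ψ i * cuntzWord ψ J := by
  have h : (Fin.cons i J ∘ Fin.succ) = J := funext fun k => by simp
  rw [cuntzWord_succ, h, Fin.cons_zero]

lemma cuntzWord_castSucc {r : ℕ} (J : Fin (r+1) → Fin d) :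
    cuntzWord ψ J = cuntzWord ψ (J ∘ Fin.castSucc) * ψ (J (Fin.last r)) := by
  show (List.ofFn fun k => ψ (J k)).prod = (List.ofFn fun k => ψ (J (Fin.castSucc k))).prod * ψ (J (Fin.last r))
  rw [List.ofFn_succ' (fun k => ψ (J k)), List.prod_concat]

lemma star_cuntzWord_mul (hψ : ∀ i j, star (ψ i) * ψ j = if i = j then (1 : B) else 0)
    {r : ℕ} (J K : Fin r → Fin d) :
    star (cuntzWord ψ J) * cuntzWord ψ K = if J = K then 1 else 0 := by
  induction r with
  | zero =>
      simp [cuntzWord, Subsingleton.elim J K]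
  | succ r ih =>
      rw [cuntzWord_succ J, cuntzWord_succ K, star_mul]
      have : star (cuntzWord ψ (J ∘ Fin.succ)) * star (ψ (J 0)) * (ψ (K 0) * cuntzWord ψ (K ∘ Fin.succ))
          = star (cuntzWord ψ (J ∘ Fin.succ)) * (star (ψ (J 0)) * ψ (K 0)) * cuntzWord ψ (K ∘ Fin.succ) := by
        simp only [mul_assoc]
      rw [this, hψ]
      by_cases h0 : J 0 = K 0
      · rw [if_pos h0, mul_one, ih]
        have h2 : (J = K) ↔ (J ∘ Fin.succ = K ∘ Fin.succ) := by
          constructor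
          · intro h; rw [h]
          · intro h
            funext k
            refine Fin.cases h0 (fun k => congrFun h k) k
        simp [h2]
      · rw [if_neg h0, mul_zero, zero_mul, if_neg]
        intro h; exact h0 (congrFun h 0)

lemma star_cuntzWord_mul_long (hψ : ∀ i j, star (ψ i) * ψ j = if i = j then (1 : B) else 0)
    {r : ℕ} (J : Fin r → Fin d) (K : Fin (r+1) → Fin d) :
    star (cuntzWord ψ J) * cuntzWord ψ K =
      if J = K ∘ Fin.castSucc then ψ (K (Fin.last r)) else 0 := by
  rw [cuntzWord_castSucc K, ← mul_assoc, star_cuntzWord_mul hψ]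
  split <;> simp

lemma sum_perm_last {M : Type*} [AddCommMonoid M] (e : ℕ) (f : Fin (e+1) → M) :
    ∑ p : Equiv.Perm (Fin (e+1)), f (p (Fin.last e)) = e.factorial • ∑ i, f i := by
  have h1 : ∑ p : Equiv.Perm (Fin (e+1)), f (p (Fin.last e))
      = ∑ p : Equiv.Perm (Fin (e+1)), f (p 0) := by
    refine Fintype.sum_equiv (Equiv.mulRight (Equiv.swap (0 : Fin (e+1)) (Fin.last e)))
      _ _ ?_
    intro p
    simp [Equiv.Perm.mul_apply]
  rw [h1]
  have h2 : ∑ p : Equiv.Perm (Fin (e+1)), f (p 0)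
      = ∑ x : Fin (e+1) × Equiv.Perm (Fin e), f x.1 := by
    refine (Fintype.sum_equiv Equiv.Perm.decomposeFin.symm _ _ ?_).symm
    intro x
    obtain ⟨a, b⟩ := x
    simp
  rw [h2, Fintype.sum_prod_type]
  simp [Finset.sum_const, Fintype.card_perm, ← Finset.smul_sum]

lemma coe_eq_iff (e : ℕ) (i : Fin (e+1)) (p q : Equiv.Perm (Fin (e+1))) :
    ⇑q = Fin.cons i ⇑p ∘ Fin.castSucc ↔
      q = p * (finRotate (e+1))⁻¹ ∧ i = p (Fin.last e) := by
  have hrot0 : (finRotate (e+1))⁻¹ (0 : Fin (e+1)) = Fin.last e := by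
    rw [Equiv.Perm.inv_def, Equiv.symm_apply_eq, finRotate_last]
  have hrots : ∀ k : Fin e, (finRotate (e+1))⁻¹ k.succ = k.castSucc := by
    intro k
    rw [Equiv.Perm.inv_def, Equiv.symm_apply_eq, finRotate_succ_apply, Fin.coeSucc_eq_succ]
  constructor
  · intro h
    have h0 : q 0 = i := by simpa using congrFun h 0
    have hs : ∀ k : Fin e, q k.succ = p k.castSucc := by
      intro k
      have := congrFun h k.succ
      simpa [← Fin.succ_castSucc] using this
    have hi : i = p (Fin.last e) := by
      have hqj : q (q⁻¹ (p (Fin.last e))) = p (Fin.last e) := Equiv.apply_symm_apply q _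
      rcases Fin.eq_zero_or_eq_succ (q⁻¹ (p (Fin.last e))) with hz | ⟨k, hk⟩
      · rw [hz, h0] at hqj; exact hqj
      · rw [hk, hs] at hqj
        exact absurd (p.injective hqj) (Fin.castSucc_lt_last k).ne
    refine ⟨?_, hi⟩
    ext j
    refine Fin.cases ?_ (fun k => ?_) j
    · rw [h0, Equiv.Perm.mul_apply, hrot0, hi]
    · rw [hs, Equiv.Perm.mul_apply, hrots]
  · rintro ⟨rfl, rfl⟩
    funext j
    refine Fin.cases ?_ (fun k => ?_) j
    · simp [Equiv.Perm.mul_apply, hrot0]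
    · simp [Equiv.Perm.mul_apply, hrots, ← Fin.succ_castSucc]
end aux

section main
variable {B : Type*} [CStarAlgebra B]

lemma cuntz_atom {e : ℕ} {ψ : Fin (e+1) → B}
    (hψ : ∀ i j, star (ψ i) * ψ j = if i = j then (1 : B) else 0)
    (i : Fin (e+1)) (q p : Equiv.Perm (Fin (e+1))) :
    star (cuntzWord ψ ⇑q) * (ψ i * cuntzWord ψ ⇑p * star (ψ i)) =
      if q = p * (finRotate (e+1))⁻¹ ∧ i = p (Fin.last e) then
        ψ (p (Fin.last e)) * star (ψ (p (Fin.last e))) else 0 := by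
  rw [← cuntzWord_cons, ← mul_assoc, star_cuntzWord_mul_long hψ, ite_mul, zero_mul]
  rw [if_congr (coe_eq_iff e i p q) rfl rfl]
  split
  · rename_i h
    rw [h.2]
    congr 2
  · rfl

lemma hsign (e : ℕ) (p : Equiv.Perm (Fin (e+1))) :
    ((Equiv.Perm.sign (p * (finRotate (e+1))⁻¹) : ℤ) * (Equiv.Perm.sign p : ℤ)) = (-1)^e := by
  have h : (Equiv.Perm.sign (p * (finRotate (e+1))⁻¹)) * (Equiv.Perm.sign p)
      = ((-1)^e : ℤˣ) := by
    rw [map_mul, map_inv, sign_finRotate]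
    rw [mul_comm, ← mul_assoc]
    rw [Int.units_mul_self, one_mul]
    rw [← inv_pow, inv_neg, inv_one]
    rw [Nat.add_sub_cancel]
  calc ((Equiv.Perm.sign (p * (finRotate (e+1))⁻¹) : ℤ) * (Equiv.Perm.sign p : ℤ))
      = (((Equiv.Perm.sign (p * (finRotate (e+1))⁻¹)) * (Equiv.Perm.sign p) : ℤˣ) : ℤ) := by
        push_cast; ring
    _ = (((-1)^e : ℤˣ) : ℤ) := by rw [h]
    _ = (-1)^e := by push_cast; ring
end main

/-- **The special conjugate identity.**
Let `ψ₁, …, ψ_d` be a Cuntz family of order `d` in a unital complex C*-algebra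
`B` with canonical endomorphism `σ`.  Then the totally antisymmetric element
`S := (d!)^{-1/2} Σ_{p ∈ Sym(d)} sign(p) ψ_{p(1)} ⋯ ψ_{p(d)}` satisfies
`S* σ(S) = (−1)^{d−1} d^{−1} · 1`. -/
theorem antisymmetric_special_conjugate_identity {B : Type*} [CStarAlgebra B]
    {d : ℕ} (ψ : Fin d → B) (hψ : IsCuntzFamily ψ)
    (S : B)
    (hS : S = (Real.sqrt (Nat.factorial d))⁻¹ •
      ∑ p : Equiv.Perm (Fin d), (Equiv.Perm.sign p : ℤ) • cuntzWord ψ ⇑p) :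
    star S * cuntzEndo ψ S = ((-1 : ℝ) ^ (d - 1) * (d : ℝ)⁻¹) • (1 : B) := by
  obtain ⟨horth, hsum⟩ := hψ
  cases d with
  | zero =>
      have : cuntzEndo ψ S = 0 := by simp [cuntzEndo]
      rw [this, mul_zero]
      norm_num
  | succ e =>
      subst hS
      have expand : star ((Real.sqrt (Nat.factorial (e+1)))⁻¹ •
            ∑ p : Equiv.Perm (Fin (e+1)), (Equiv.Perm.sign p : ℤ) • cuntzWord ψ ⇑p) *
          cuntzEndo ψ ((Real.sqrt (Nat.factorial (e+1)))⁻¹ •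
            ∑ p : Equiv.Perm (Fin (e+1)), (Equiv.Perm.sign p : ℤ) • cuntzWord ψ ⇑p)
          = ((Real.sqrt (Nat.factorial (e+1)))⁻¹ * (Real.sqrt (Nat.factorial (e+1)))⁻¹) •
            ∑ i : Fin (e+1), ∑ p : Equiv.Perm (Fin (e+1)), ∑ q : Equiv.Perm (Fin (e+1)),
              ((Equiv.Perm.sign q : ℤ) * (Equiv.Perm.sign p : ℤ)) •
                (star (cuntzWord ψ ⇑q) * (ψ i * cuntzWord ψ ⇑p * star (ψ i))) := by
        simp only [cuntzEndo, star_smul, star_trivial, star_sum, star_zsmul,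
          Finset.mul_sum, Finset.sum_mul, Finset.smul_sum, smul_mul_assoc, mul_smul_comm,
          smul_smul, mul_assoc]
        refine Finset.sum_congr rfl fun i _ => Finset.sum_congr rfl fun p _ =>
          Finset.sum_congr rfl fun q _ => ?_
        simp only [← Int.cast_smul_eq_zsmul ℝ, smul_smul]
        congr 1
        push_cast
        ring
      rw [expand]
      have inner : ∀ (i : Fin (e+1)) (p : Equiv.Perm (Fin (e+1))),
          ∑ q : Equiv.Perm (Fin (e+1)),
            ((Equiv.Perm.sign q : ℤ) * (Equiv.Perm.sign p : ℤ)) •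
              (star (cuntzWord ψ ⇑q) * (ψ i * cuntzWord ψ ⇑p * star (ψ i)))
          = if i = p (Fin.last e) then
              ((-1:ℤ)^e) • (ψ (p (Fin.last e)) * star (ψ (p (Fin.last e)))) else 0 := by
        intro i p
        have hterm : ∀ q : Equiv.Perm (Fin (e+1)),
            ((Equiv.Perm.sign q : ℤ) * (Equiv.Perm.sign p : ℤ)) •
              (star (cuntzWord ψ ⇑q) * (ψ i * cuntzWord ψ ⇑p * star (ψ i)))
            = if q = p * (finRotate (e+1))⁻¹ then
                (if i = p (Fin.last e) then
                  ((Equiv.Perm.sign q : ℤ) * (Equiv.Perm.sign p : ℤ)) •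
                    (ψ (p (Fin.last e)) * star (ψ (p (Fin.last e)))) else 0) else 0 := by
          intro q
          rw [cuntz_atom horth, smul_ite, smul_zero, ite_and]
        simp only [hterm]
        rw [Finset.sum_ite_eq']
        simp only [Finset.mem_univ, if_true, hsign e p]
      simp only [inner]
      rw [Finset.sum_comm]
      have middle : ∀ p : Equiv.Perm (Fin (e+1)),
          ∑ i : Fin (e+1), (if i = p (Fin.last e) then
              ((-1:ℤ)^e) • (ψ (p (Fin.last e)) * star (ψ (p (Fin.last e)))) else 0)
          = ((-1:ℤ)^e) • (ψ (p (Fin.last e)) * star (ψ (p (Fin.last e)))) := by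
        intro p
        rw [Finset.sum_ite_eq']
        simp
      simp only [middle]
      rw [← Finset.smul_sum, sum_perm_last e (fun j => ψ j * star (ψ j)), hsum]
      rw [← Nat.cast_smul_eq_nsmul ℝ, ← Int.cast_smul_eq_zsmul ℝ]
      simp only [smul_smul]
      congr 1
      simp only [Nat.succ_sub_one]
      rw [← mul_inv, Real.mul_self_sqrt (by positivity), Nat.factorial_succ]
      push_cast
      field_simp
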